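/- Let (Ω, ℱ, ℙ) be a probability space with a filtration (ℱ_k)_{k∈ℕ}. Let d ∈ ℕ, M_J ≥ 0, β ∈ (0,1], λ ≥ 0, η > 0, J* ∈ ℝ and D₁, D_{1+β}, D₂ ≥ 0. Let J : ℝ^d → ℝ be differentiable, bounded, with J(x) ≤ J* for all x, and satisfying the smoothness inequality |J(x) − J(y) − ⟨∇J(y), x − y⟩| ≤ M_J·(‖x − y‖^{1+β} + ‖x − y‖² + λ‖x − y‖) for all x, y ∈ ℝ^d. Let θ₀ ∈ ℝ^d be deterministic and define θ_{k+1} = θ_k + η·g_k, where each g_k : Ω → ℝ^d is ℱ_{k+1}-measurable and square-integrable with, almost surely, 𝔼[g_k | ℱ_k] = ∇J(θ_k), 𝔼[‖g_k‖ | ℱ_k] ≤ D₁, 𝔼[‖g_k‖^{1+β} | ℱ_k] ≤ D_{1+β} and 𝔼[‖g_k‖² | ℱ_k] ≤ D₂. Then for every K ≥ 1, (1/K)·Σ_{k=0}^{K−1} 𝔼[‖∇J(θ_k)‖²] ≤ (J* − J(θ₀))/(η·K) + M_J·(η^β·D_{1+β} + η·D₂ + λ·D₁). -/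

import Mathlib

open MeasureTheory
open scoped RealInnerProductSpace

/-- Constant-step-size convergence bound of the paper's Theorem 1: for stochastic
gradient ascent `θ_{k+1} = θ_k + η g_k` with unbiased conditional gradients and
conditional moment bounds, for every `K ≥ 1`,
`(1/K) Σ_{k<K} 𝔼‖∇J(θ_k)‖² ≤ (J*-J(θ₀))/(ηK) + M_J(η^β D_{1+β} + η D₂ + λ D₁)`. -/
theorem stmt7 {Ω : Type*} {m0 : MeasurableSpace Ω} (P : Measure Ω) [IsProbabilityMeasure P]
    (ℱ : Filtration ℕ m0)
    (d : ℕ) (MJ β lam η Jstar D₁ D1β D₂ Jmax : ℝ)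
    (hMJ : 0 ≤ MJ) (hβ : β ∈ Set.Ioc (0 : ℝ) 1) (hlam : 0 ≤ lam) (hη : 0 < η)
    (hD₁ : 0 ≤ D₁) (hD1β : 0 ≤ D1β) (hD₂ : 0 ≤ D₂)
    (J : EuclideanSpace ℝ (Fin d) → ℝ)
    (J' : EuclideanSpace ℝ (Fin d) → EuclideanSpace ℝ (Fin d))
    (hJdiff : ∀ x, HasGradientAt J (J' x) x)
    (hJbdd : ∀ x, |J x| ≤ Jmax)
    (hJub : ∀ x, J x ≤ Jstar)
    (hsmooth : ∀ x y : EuclideanSpace ℝ (Fin d),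
      |J x - J y - ⟪J' y, x - y⟫|
        ≤ MJ * (‖x - y‖ ^ (1 + β) + ‖x - y‖ ^ 2 + lam * ‖x - y‖))
    (θ0 : EuclideanSpace ℝ (Fin d))
    (θ : ℕ → Ω → EuclideanSpace ℝ (Fin d))
    (g : ℕ → Ω → EuclideanSpace ℝ (Fin d))
    (hθ0 : ∀ ω, θ 0 ω = θ0)
    (hθrec : ∀ k ω, θ (k + 1) ω = θ k ω + η • g k ω)
    (hgadapt : ∀ k, Measurable[ℱ (k + 1)] (g k))
    (hgL2 : ∀ k, MemLp (g k) 2 P)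
    (hgmean : ∀ k, P[g k | ℱ k] =ᵐ[P] fun ω => J' (θ k ω))
    (hg1 : ∀ k, ∀ᵐ ω ∂P, (P[fun ω' => ‖g k ω'‖ | ℱ k]) ω ≤ D₁)
    (hg1β : ∀ k, ∀ᵐ ω ∂P, (P[fun ω' => ‖g k ω'‖ ^ (1 + β) | ℱ k]) ω ≤ D1β)
    (hg2 : ∀ k, ∀ᵐ ω ∂P, (P[fun ω' => ‖g k ω'‖ ^ 2 | ℱ k]) ω ≤ D₂) :
    ∀ K : ℕ, 1 ≤ K →
      (1 / (K : ℝ)) * ∑ k ∈ Finset.range K, ∫ ω, ‖J' (θ k ω)‖ ^ 2 ∂P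
        ≤ (Jstar - J θ0) / (η * K) + MJ * (η ^ β * D1β + η * D₂ + lam * D₁) := by

  obtain ⟨hβ0, hβ1⟩ := hβ
  set C : ℝ := η ^ β * D1β + η * D₂ + lam * D₁ with hC
  -- basic analytic facts
  have habs : ∀ (x : EuclideanSpace ℝ (Fin d)) (i : Fin d), |x i| ≤ ‖x‖ := by
    intro x i
    rw [EuclideanSpace.norm_eq]
    have h : ‖x i‖ ^ 2 ≤ ∑ j, ‖x j‖ ^ 2 :=
      Finset.single_le_sum (f := fun j => ‖x j‖ ^ 2) (fun j _ => by positivity) (Finset.mem_univ i)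
    calc |x i| = Real.sqrt (‖x i‖ ^ 2) := by
          rw [Real.sqrt_sq_eq_abs, Real.norm_eq_abs, abs_abs]
      _ ≤ _ := Real.sqrt_le_sqrt h
  have hinner : ∀ x y : EuclideanSpace ℝ (Fin d), ⟪x, y⟫ = ∑ i, x i * y i := by
    intro x y; simp [PiLp.inner_apply, RCLike.inner_apply, mul_comm]
  have hnormsq : ∀ x : EuclideanSpace ℝ (Fin d), ‖x‖ ^ 2 = ∑ i, x i * x i := by
    intro x
    rw [← real_inner_self_eq_norm_sq]
    exact hinner x x
  have hJ'meas : Measurable J' := by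
    have h1 : J' = fun x =>
        (InnerProductSpace.toDual ℝ (EuclideanSpace ℝ (Fin d))).symm (fderiv ℝ J x) := by
      funext x
      rw [(hJdiff x).hasFDerivAt.fderiv]
      simp
    rw [h1]
    exact (LinearIsometryEquiv.continuous _).measurable.comp (measurable_fderiv ℝ J)
  have hJcont : Continuous J := by
    rw [continuous_iff_continuousAt]
    exact fun x => (hJdiff x).hasFDerivAt.continuousAt
  -- measurability of the iterates
  have hθF : ∀ k, Measurable[ℱ k] (θ k) := by
    intro k
    induction k with
    | zero =>
      have h : θ 0 = fun _ => θ0 := funext hθ0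
      rw [h]; exact measurable_const
    | succ k ih =>
      have h : θ (k + 1) = fun ω => θ k ω + η • g k ω := funext (hθrec k)
      rw [h]
      exact (ih.mono (ℱ.mono k.le_succ) le_rfl).add ((hgadapt k).const_smul η)
  have hθm0 : ∀ k, Measurable (θ k) := fun k => (hθF k).mono (ℱ.le k) le_rfl
  have hgm0 : ∀ k, Measurable (g k) := fun k => (hgadapt k).mono (ℱ.le (k + 1)) le_rfl
  -- integrability of basic quantities
  have hgInt : ∀ k, Integrable (g k) P := fun k => (hgL2 k).integrable one_le_two
  have hgn : ∀ k, Integrable (fun ω => ‖g k ω‖) P := fun k => (hgInt k).norm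
  have hgsq : ∀ k, Integrable (fun ω => ‖g k ω‖ ^ 2) P := fun k => (hgL2 k).norm.integrable_sq
  have hg1βInt : ∀ k, Integrable (fun ω => ‖g k ω‖ ^ (1 + β)) P := by
    intro k
    refine Integrable.mono' ((integrable_const (1 : ℝ)).add (hgsq k)) ?_ (ae_of_all _ fun ω => ?_)
    · exact ((Real.continuous_rpow_const (by linarith)).measurable.comp
        (hgm0 k).norm).aestronglyMeasurable
    · have ht : (0 : ℝ) ≤ ‖g k ω‖ := norm_nonneg _
      rw [Real.norm_eq_abs, abs_of_nonneg (Real.rpow_nonneg ht _)]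
      simp only [Pi.add_apply]
      rcases le_or_gt ‖g k ω‖ 1 with h | h
      · have h1 : ‖g k ω‖ ^ (1 + β) ≤ 1 := Real.rpow_le_one ht h (by linarith)
        nlinarith [sq_nonneg ‖g k ω‖]
      · have h2 : ‖g k ω‖ ^ (1 + β) ≤ ‖g k ω‖ ^ (2 : ℝ) :=
          Real.rpow_le_rpow_of_exponent_le h.le (by linarith)
        rw [Real.rpow_two] at h2
        linarith
  have hJθInt : ∀ k, Integrable (fun ω => J (θ k ω)) P := by
    intro k
    refine Integrable.mono' (integrable_const Jmax)
      ((hJcont.measurable.comp (hθm0 k)).aestronglyMeasurable) (ae_of_all _ fun ω => ?_)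
    simpa [Real.norm_eq_abs] using hJbdd (θ k ω)
  -- expectations of moment bounds
  have hEg1 : ∀ k, ∫ ω, ‖g k ω‖ ∂P ≤ D₁ := by
    intro k
    rw [← integral_condExp (f := fun ω => ‖g k ω‖) (ℱ.le k)]
    calc ∫ ω, (P[fun ω' => ‖g k ω'‖ | ℱ k]) ω ∂P
        ≤ ∫ _, D₁ ∂P := integral_mono_ae integrable_condExp (integrable_const D₁) (hg1 k)
      _ = D₁ := by simp
  have hEg1β : ∀ k, ∫ ω, ‖g k ω‖ ^ (1 + β) ∂P ≤ D1β := by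
    intro k
    rw [← integral_condExp (f := fun ω => ‖g k ω‖ ^ (1 + β)) (ℱ.le k)]
    calc ∫ ω, (P[fun ω' => ‖g k ω'‖ ^ (1 + β) | ℱ k]) ω ∂P
        ≤ ∫ _, D1β ∂P := integral_mono_ae integrable_condExp (integrable_const D1β) (hg1β k)
      _ = D1β := by simp
  have hEg2 : ∀ k, ∫ ω, ‖g k ω‖ ^ 2 ∂P ≤ D₂ := by
    intro k
    rw [← integral_condExp (f := fun ω => ‖g k ω‖ ^ 2) (ℱ.le k)]
    calc ∫ ω, (P[fun ω' => ‖g k ω'‖ ^ 2 | ℱ k]) ω ∂P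
        ≤ ∫ _, D₂ ∂P := integral_mono_ae integrable_condExp (integrable_const D₂) (hg2 k)
      _ = D₂ := by simp
  -- conditional-expectation identity, coordinatewise
  have hFInt : ∀ k, Integrable (fun ω => J' (θ k ω)) P :=
    fun k => integrable_condExp.congr (hgmean k)
  have hFiMeas : ∀ k (i : Fin d), Measurable[ℱ k] fun ω => J' (θ k ω) i :=
    fun k i => (measurable_pi_apply i).comp ((WithLp.measurable_ofLp 2 _).comp (hJ'meas.comp (hθF k)))
  have hFiInt : ∀ k (i : Fin d), Integrable (fun ω => J' (θ k ω) i) P := by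
    intro k i
    refine Integrable.mono' (hFInt k).norm
      ((hFiMeas k i).mono (ℱ.le k) le_rfl).aestronglyMeasurable (ae_of_all _ fun ω => ?_)
    simpa [Real.norm_eq_abs] using habs (J' (θ k ω)) i
  have hgiInt : ∀ k (i : Fin d), Integrable (fun ω => g k ω i) P := by
    intro k i
    refine Integrable.mono' (hgn k) (((measurable_pi_apply i).comp ((WithLp.measurable_ofLp 2 _).comp (hgm0 k))).aestronglyMeasurable)
      (ae_of_all _ fun ω => ?_)
    simpa [Real.norm_eq_abs] using habs (g k ω) i
  have hGi : ∀ k (i : Fin d),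
      (fun ω => J' (θ k ω) i) =ᵐ[P] P[fun ω => g k ω i | ℱ k] := by
    intro k i
    refine ae_eq_condExp_of_forall_setIntegral_eq (ℱ.le k) (hgiInt k i)
      (fun s _ _ => (hFiInt k i).integrableOn) (fun s hs hμs => ?_)
      ((hFiMeas k i).stronglyMeasurable.aestronglyMeasurable)
    have h1 : ∫ ω in s, J' (θ k ω) i ∂P
        = EuclideanSpace.proj (𝕜 := ℝ) i (∫ ω in s, J' (θ k ω) ∂P) :=
      by rw [← ContinuousLinearMap.integral_comp_comm _ (hFInt k).integrableOn]; rfl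
    have h2 : ∫ ω in s, g k ω i ∂P
        = EuclideanSpace.proj (𝕜 := ℝ) i (∫ ω in s, g k ω ∂P) :=
      by rw [← ContinuousLinearMap.integral_comp_comm _ (hgInt k).integrableOn]; rfl
    have h3 : ∫ ω in s, J' (θ k ω) ∂P = ∫ ω in s, g k ω ∂P := by
      rw [← setIntegral_condExp (ℱ.le k) (hgInt k) hs]
      exact integral_congr_ae (ae_restrict_of_ae (hgmean k).symm)
    rw [h1, h2, h3]
  have hFi_bd : ∀ k (i : Fin d), ∀ᵐ ω ∂P, |J' (θ k ω) i| ≤ D₁ := by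
    intro k i
    have hle : P[fun ω => g k ω i | ℱ k] ≤ᵐ[P] P[fun ω' => ‖g k ω'‖ | ℱ k] :=
      condExp_mono (hgiInt k i) (hgn k) (ae_of_all _ fun ω =>
        le_trans (le_abs_self _) (habs (g k ω) i))
    have hle2 : P[fun ω => -(g k ω i) | ℱ k] ≤ᵐ[P] P[fun ω' => ‖g k ω'‖ | ℱ k] :=
      condExp_mono (hgiInt k i).neg (hgn k) (ae_of_all _ fun ω =>
        le_trans (neg_le_abs _) (habs (g k ω) i))
    have hneg : P[fun ω => -(g k ω i) | ℱ k]
        =ᵐ[P] fun ω => -((P[fun ω => g k ω i | ℱ k]) ω) := by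
      have h := condExp_neg (μ := P) (m := ℱ k) (fun ω => g k ω i)
      filter_upwards [h] with ω hω
      exact hω
    filter_upwards [hGi k i, hle, hle2, hneg, hg1 k] with ω h1 h2 h3 h4 h5
    rw [h1, abs_le]
    refine ⟨?_, le_trans h2 h5⟩
    have h6 : -((P[fun ω => g k ω i | ℱ k]) ω) ≤ D₁ := by
      rw [← h4]; exact le_trans h3 h5
    linarith
  have hFigInt : ∀ k (i : Fin d), Integrable (fun ω => J' (θ k ω) i * g k ω i) P := by
    intro k i
    refine Integrable.mono' ((hgn k).const_mul D₁)
      ((((hFiMeas k i).mono (ℱ.le k) le_rfl).mul ((measurable_pi_apply i).comp ((WithLp.measurable_ofLp 2 _).comp (hgm0 k)))).aestronglyMeasurable) ?_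
    filter_upwards [hFi_bd k i] with ω hω
    rw [Real.norm_eq_abs, abs_mul]
    have h1 : |g k ω i| ≤ ‖g k ω‖ := habs (g k ω) i
    nlinarith [abs_nonneg (J' (θ k ω) i), abs_nonneg (g k ω i)]
  have hFi2Int : ∀ k (i : Fin d), Integrable (fun ω => J' (θ k ω) i * J' (θ k ω) i) P := by
    intro k i
    refine Integrable.mono' (integrable_const (D₁ * D₁))
      ((((hFiMeas k i).mono (ℱ.le k) le_rfl).mul
        ((hFiMeas k i).mono (ℱ.le k) le_rfl)).aestronglyMeasurable) ?_
    filter_upwards [hFi_bd k i] with ω hω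
    rw [Real.norm_eq_abs, abs_mul]
    nlinarith [abs_nonneg (J' (θ k ω) i)]
  have hii : ∀ k (i : Fin d),
      ∫ ω, J' (θ k ω) i * g k ω i ∂P = ∫ ω, J' (θ k ω) i * J' (θ k ω) i ∂P := by
    intro k i
    have hpull : P[(fun ω => J' (θ k ω) i) * (fun ω => g k ω i) | ℱ k]
        =ᵐ[P] (fun ω => J' (θ k ω) i) * P[(fun ω => g k ω i) | ℱ k] :=
      condExp_mul_of_stronglyMeasurable_left (hFiMeas k i).stronglyMeasurable (hFigInt k i) (hgiInt k i)
    calc ∫ ω, J' (θ k ω) i * g k ω i ∂P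
        = ∫ ω, (P[(fun ω => J' (θ k ω) i) * (fun ω => g k ω i) | ℱ k]) ω ∂P :=
          (integral_condExp (f := (fun ω => J' (θ k ω) i) * fun ω => g k ω i) (ℱ.le k)).symm
      _ = ∫ ω, J' (θ k ω) i * (P[(fun ω => g k ω i) | ℱ k]) ω ∂P := by
          refine integral_congr_ae ?_
          filter_upwards [hpull] with ω hω
          simpa using hω
      _ = ∫ ω, J' (θ k ω) i * J' (θ k ω) i ∂P := by
          refine integral_congr_ae ?_
          filter_upwards [hGi k i] with ω hω
          rw [← hω]
  -- integrability of inner product and gradient-norm squared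
  have hInnerInt : ∀ k, Integrable (fun ω => ⟪J' (θ k ω), g k ω⟫) P := by
    intro k
    have h : (fun ω => ⟪J' (θ k ω), g k ω⟫)
        = fun ω => ∑ i, J' (θ k ω) i * g k ω i := funext fun ω => hinner _ _
    rw [h]
    exact integrable_finset_sum _ fun i _ => hFigInt k i
  have hkey : ∀ k, ∫ ω, ⟪J' (θ k ω), g k ω⟫ ∂P = ∫ ω, ‖J' (θ k ω)‖ ^ 2 ∂P := by
    intro k
    have h1 : (fun ω => ⟪J' (θ k ω), g k ω⟫)
        = fun ω => ∑ i, J' (θ k ω) i * g k ω i := funext fun ω => hinner _ _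
    have h2 : (fun ω => ‖J' (θ k ω)‖ ^ 2)
        = fun ω => ∑ i, J' (θ k ω) i * J' (θ k ω) i := funext fun ω => hnormsq _
    rw [h1, h2, integral_finset_sum _ fun i _ => hFigInt k i,
      integral_finset_sum _ fun i _ => hFi2Int k i]
    exact Finset.sum_congr rfl fun i _ => hii k i
  -- per-step descent inequality
  have hηβ : η ^ (1 + β) = η * η ^ β := by rw [Real.rpow_add hη, Real.rpow_one]
  have hηβ0 : (0 : ℝ) ≤ η ^ (1 + β) := Real.rpow_nonneg hη.le _
  have hstep : ∀ k, (∫ ω, J (θ k ω) ∂P) + η * ((∫ ω, ‖J' (θ k ω)‖ ^ 2 ∂P) - MJ * C)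
      ≤ ∫ ω, J (θ (k + 1) ω) ∂P := by
    intro k
    have hpt : ∀ ω, η * ⟪J' (θ k ω), g k ω⟫
        - MJ * (η ^ (1 + β) * ‖g k ω‖ ^ (1 + β) + η ^ 2 * ‖g k ω‖ ^ 2 + lam * (η * ‖g k ω‖))
        ≤ J (θ (k + 1) ω) - J (θ k ω) := by
      intro ω
      have h := hsmooth (θ (k + 1) ω) (θ k ω)
      have hd : θ (k + 1) ω - θ k ω = η • g k ω := by
        rw [hθrec k ω]; abel
      rw [hd] at h
      have h1 : ⟪J' (θ k ω), η • g k ω⟫ = η * ⟪J' (θ k ω), g k ω⟫ :=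
        real_inner_smul_right _ _ _
      have h2 : ‖η • g k ω‖ = η * ‖g k ω‖ := by
        rw [norm_smul, Real.norm_eq_abs, abs_of_pos hη]
      have h3 : ‖η • g k ω‖ ^ (1 + β) = η ^ (1 + β) * ‖g k ω‖ ^ (1 + β) := by
        rw [h2, Real.mul_rpow hη.le (norm_nonneg _)]
      have h4 : ‖η • g k ω‖ ^ 2 = η ^ 2 * ‖g k ω‖ ^ 2 := by rw [h2]; ring
      rw [h1, h3, h4, h2] at h
      have h5 := (abs_le.mp h).1
      linarith
    have Ia : Integrable (fun ω => η ^ (1 + β) * ‖g k ω‖ ^ (1 + β)) P :=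
      (hg1βInt k).const_mul _
    have Ib : Integrable (fun ω => η ^ 2 * ‖g k ω‖ ^ 2) P := (hgsq k).const_mul _
    have Ic : Integrable (fun ω => lam * (η * ‖g k ω‖)) P :=
      ((hgn k).const_mul η).const_mul lam
    have Iab : Integrable (fun ω => η ^ (1 + β) * ‖g k ω‖ ^ (1 + β)
        + η ^ 2 * ‖g k ω‖ ^ 2) P := Ia.add Ib
    have Iabc : Integrable (fun ω => η ^ (1 + β) * ‖g k ω‖ ^ (1 + β)
        + η ^ 2 * ‖g k ω‖ ^ 2 + lam * (η * ‖g k ω‖)) P := Iab.add Ic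
    have hLint : Integrable (fun ω => η * ⟪J' (θ k ω), g k ω⟫
        - MJ * (η ^ (1 + β) * ‖g k ω‖ ^ (1 + β) + η ^ 2 * ‖g k ω‖ ^ 2
          + lam * (η * ‖g k ω‖))) P :=
      ((hInnerInt k).const_mul η).sub (Iabc.const_mul MJ)
    have hmono := integral_mono (g := fun ω => J (θ (k + 1) ω) - J (θ k ω)) hLint
      ((hJθInt (k + 1)).sub (hJθInt k)) hpt
    rw [integral_sub (hJθInt (k + 1)) (hJθInt k)] at hmono
    rw [integral_sub ((hInnerInt k).const_mul η) (Iabc.const_mul MJ),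
      integral_const_mul, integral_const_mul, integral_add Iab Ic,
      integral_add Ia Ib, integral_const_mul, integral_const_mul, integral_const_mul,
      integral_const_mul, hkey k] at hmono
    have b1 := hEg1β k
    have b2 := hEg2 k
    have b3 := hEg1 k
    have heq : η * ((∫ ω, ‖J' (θ k ω)‖ ^ 2 ∂P) - MJ * C)
        = η * (∫ ω, ‖J' (θ k ω)‖ ^ 2 ∂P)
          - MJ * (η ^ (1 + β) * D1β + η ^ 2 * D₂ + lam * (η * D₁)) := by
      rw [hC, hηβ]; ring
    have p1 : 0 ≤ MJ * (η ^ (1 + β) * (D1β - ∫ ω, ‖g k ω‖ ^ (1 + β) ∂P)) :=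
      mul_nonneg hMJ (mul_nonneg hηβ0 (by linarith))
    have p2 : 0 ≤ MJ * (η ^ 2 * (D₂ - ∫ ω, ‖g k ω‖ ^ 2 ∂P)) :=
      mul_nonneg hMJ (mul_nonneg (sq_nonneg η) (by linarith))
    have p3 : 0 ≤ MJ * (lam * (η * (D₁ - ∫ ω, ‖g k ω‖ ∂P))) :=
      mul_nonneg hMJ (mul_nonneg hlam (mul_nonneg hη.le (by linarith)))
    nlinarith [hmono]
  -- telescoping
  have htel : ∀ K : ℕ, J θ0 + η * ((∑ k ∈ Finset.range K, ∫ ω, ‖J' (θ k ω)‖ ^ 2 ∂P)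
      - K * (MJ * C)) ≤ ∫ ω, J (θ K ω) ∂P := by
    intro K
    induction K with
    | zero =>
      have h : ∫ ω, J (θ 0 ω) ∂P = J θ0 := by simp [hθ0]
      rw [h]
      simp
    | succ K ih =>
      have h := hstep K
      rw [Finset.sum_range_succ]
      push_cast
      linarith
  have hub : ∀ K : ℕ, ∫ ω, J (θ K ω) ∂P ≤ Jstar := by
    intro K
    calc ∫ ω, J (θ K ω) ∂P ≤ ∫ _, Jstar ∂P :=
          integral_mono (hJθInt K) (integrable_const Jstar) fun ω => hJub _
      _ = Jstar := by simp
  -- conclusion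
  intro K hK
  have hK0 : (0 : ℝ) < (K : ℝ) := by exact_mod_cast hK
  have h1 : J θ0 + η * ((∑ k ∈ Finset.range K, ∫ ω, ‖J' (θ k ω)‖ ^ 2 ∂P)
      - K * (MJ * C)) ≤ Jstar := le_trans (htel K) (hub K)
  have h2 : (∑ k ∈ Finset.range K, ∫ ω, ‖J' (θ k ω)‖ ^ 2 ∂P)
      ≤ (Jstar - J θ0) / η + K * (MJ * C) := by
    have h4 : ((∑ k ∈ Finset.range K, ∫ ω, ‖J' (θ k ω)‖ ^ 2 ∂P)
        - K * (MJ * C)) * η ≤ Jstar - J θ0 := by linarith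
    have h5 := (le_div_iff₀ hη).mpr h4
    linarith
  have h3 : (1 / (K : ℝ)) * ((Jstar - J θ0) / η + K * (MJ * C))
      = (Jstar - J θ0) / (η * K) + MJ * C := by
    field_simp
  calc (1 / (K : ℝ)) * ∑ k ∈ Finset.range K, ∫ ω, ‖J' (θ k ω)‖ ^ 2 ∂P
      ≤ (1 / (K : ℝ)) * ((Jstar - J θ0) / η + K * (MJ * C)) :=
        mul_le_mul_of_nonneg_left h2 (by positivity)
    _ = (Jstar - J θ0) / (η * K) + MJ * C := h3
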